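/- For λ > 0, θ = 2/(1+2λ), and 0 ≤ x ≤ 1, the function Δ₁(x) = (1/(1+2λ)) · ((1+2λ) x^{2+θ} - 2(1+λ)x² + 1) is nonnegative; that is, 1 - 2(1+λ) x² + (1+2λ) x^{2 + 2/(1+2λ)} ≥ 0, with equality at x = 1. -/

import Mathlib

theorem turan_base_case_positive_lambda
    (l : ℝ) (hl : l > 0) (x : ℝ) (hx1 : 0 ≤ x) (hx2 : x ≤ 1) :
    1 - 2 * (1 + l) * x ^ 2 + (1 + 2 * l) * x ^ (2 + 2 / (1 + 2 * l)) ≥ 0 ∧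
    1 - 2 * (1 + l) * (1 : ℝ) ^ 2 + (1 + 2 * l) * (1 : ℝ) ^ (2 + 2 / (1 + 2 * l)) = 0 := by
  have h2l : (0:ℝ) < 1 + 2 * l := by linarith
  constructor
  · set p : ℝ := 2 + 2 / (1 + 2 * l) with hp
    have hD : (0:ℝ) < 2 + 2 * l := by linarith
    have hw1 : (0:ℝ) ≤ 1 / (2 + 2 * l) := by positivity
    have hw2 : (0:ℝ) ≤ (1 + 2 * l) / (2 + 2 * l) := by positivity
    have hsum : 1 / (2 + 2 * l) + (1 + 2 * l) / (2 + 2 * l) = 1 := by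
      field_simp
      ring
    have hxp : (0:ℝ) ≤ x ^ p := Real.rpow_nonneg hx1 p
    have key := Real.geom_mean_le_arith_mean2_weighted hw1 hw2 (by norm_num : (0:ℝ) ≤ 1) hxp hsum
    -- key : 1 ^ (1/(2+2l)) * (x^p) ^ ((1+2l)/(2+2l)) ≤ 1/(2+2l) * 1 + (1+2l)/(2+2l) * x^p
    have hgeom : (1:ℝ) ^ (1 / (2 + 2 * l)) * (x ^ p) ^ ((1 + 2 * l) / (2 + 2 * l)) = x ^ 2 := by
      rw [Real.one_rpow, one_mul, ← Real.rpow_natCast x 2, ← Real.rpow_mul hx1]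
      congr 1
      field_simp [hp]
      linear_combination (1 + 2 * l) * hp + div_mul_cancel₀ (2:ℝ) h2l.ne'
    rw [hgeom] at key
    have := mul_le_mul_of_nonneg_left key hD.le
    have hx2' : (2 + 2 * l) * ((1 / (2 + 2 * l)) * 1 + ((1 + 2 * l) / (2 + 2 * l)) * x ^ p)
        = 1 + (1 + 2 * l) * x ^ p := by
      field_simp
    nlinarith [this, hx2']
  · rw [Real.one_rpow]
    ring
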